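/- There exists a family of non-stationary finite MDPs, one for each pair (k, T) with k < T, that violates the uniform ergodicity assumption and on which every algorithm with prediction horizon k incurs expected regret at least c·(T - k - 1) for an absolute constant c > 0 (c = 1/2 suffices): the MDP has three states, the learner must irreversibly commit at time 0 to one of two absorbing states, the rewarding absorbing state s* is chosen uniformly at random and revealed in the dynamics only from time k+1 onward, and reward 1 per step accrues only at s* after time k+1. -/
import Mathlib


/-- The Bellman (optimality) operator at time `t`. -/
noncomputable def bell {S A : Type*} [Fintype S] [Fintype A] [Nonempty A]
    (r : ℕ → S → A → ℝ) (P : ℕ → S → A → S → ℝ) (t : ℕ) (v : S → ℝ) : S → ℝ :=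
  fun s => ⨆ a, (r t s a + ∑ s', P t s a s' * v s')

/-- `bellComp r P t n v = L_t ∘ ⋯ ∘ L_{t+n} v`. -/
noncomputable def bellComp {S A : Type*} [Fintype S] [Fintype A] [Nonempty A]
    (r : ℕ → S → A → ℝ) (P : ℕ → S → A → S → ℝ) : ℕ → ℕ → (S → ℝ) → S → ℝ
  | t, 0, v => bell r P t v
  | t, n + 1, v => bell r P t (bellComp r P (t + 1) n v)

/-- Expected cumulative reward of policy `π` over `n` steps starting at time `t`. -/
noncomputable def polVal {S A : Type*} [Fintype S]
    (r : ℕ → S → A → ℝ) (P : ℕ → S → A → S → ℝ) (π : ℕ → S → A) :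
    ℕ → ℕ → S → ℝ
  | 0, _, _ => 0
  | n + 1, t, s =>
      r t s (π t s) + ∑ s', P t s (π t s) s' * polVal r P π n (t + 1) s'

/-- The composed transition matrix `P_t^{π_t} ⋯ P_{t+n}^{π_{t+n}}`. -/
noncomputable def polP {S A : Type*} [Fintype S]
    (P : ℕ → S → A → S → ℝ) (π : ℕ → S → A) : ℕ → ℕ → S → S → ℝ
  | t, 0 => fun s j => P t s (π t s) j
  | t, n + 1 => fun s j => ∑ s', P t s (π t s) s' * polP P π (t + 1) n s' j

/-- next state -/
def nxt (s : Fin 3) (a : Fin 2) : Fin 3 := if s = 0 then a.succ else s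

noncomputable def PP : ℕ → Fin 3 → Fin 2 → Fin 3 → ℝ :=
  fun _ s a s' => if s' = nxt s a then 1 else 0

noncomputable def rr (k : ℕ) (σ : Fin 2) : ℕ → Fin 3 → Fin 2 → ℝ :=
  fun t s _ => if k + 1 < t ∧ s = σ.succ then 1 else 0

lemma sumP (t : ℕ) (s : Fin 3) (a : Fin 2) (v : Fin 3 → ℝ) :
    ∑ s', PP t s a s' * v s' = v (nxt s a) := by
  simp [PP, ite_mul]

lemma sup2 (f : Fin 2 → ℝ) : (⨆ a, f a) = max (f 0) (f 1) := by
  apply le_antisymm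
  · refine ciSup_le fun a => ?_
    fin_cases a
    · exact le_max_left _ _
    · exact le_max_right _ _
  · exact max_le (le_ciSup (Set.Finite.bddAbove (Set.finite_range f)) 0)
      (le_ciSup (Set.Finite.bddAbove (Set.finite_range f)) 1)

lemma bell_eq (k : ℕ) (σ : Fin 2) (t : ℕ) (v : Fin 3 → ℝ) (s : Fin 3) :
    bell (rr k σ) PP t v s = ⨆ a, (rr k σ t s a + v (nxt s a)) := by
  simp [bell, sumP]

lemma nxt_abs (s : Fin 3) (hs : s ≠ 0) (a : Fin 2) : nxt s a = s := if_neg hs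

lemma bell_abs (k : ℕ) (σ : Fin 2) (t : ℕ) (v : Fin 3 → ℝ) (s : Fin 3) (hs : s ≠ 0) :
    bell (rr k σ) PP t v s = rr k σ t s 0 + v s := by
  rw [bell_eq]
  have h : ∀ a : Fin 2, rr k σ t s a + v (nxt s a) = rr k σ t s 0 + v s := by
    intro a; rw [nxt_abs s hs]; rfl
  simp only [h, ciSup_const]

lemma bellComp_abs (k : ℕ) (σ : Fin 2) (s : Fin 3) (hs : s ≠ 0) :
    ∀ n t, bellComp (rr k σ) PP t n (fun _ => 0) s
      = ∑ j ∈ Finset.range (n + 1), rr k σ (t + j) s 0 := by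
  intro n
  induction n with
  | zero => intro t; simp [bellComp, bell_abs k σ t _ s hs]
  | succ n ih =>
    intro t
    show bell (rr k σ) PP t (bellComp (rr k σ) PP (t+1) n (fun _ => 0)) s = _
    rw [bell_abs k σ t _ s hs, ih (t+1), Finset.sum_range_succ' (fun j => rr k σ (t + j) s 0)]
    rw [add_comm]
    congr 1
    refine Finset.sum_congr rfl fun j _ => ?_
    congr 1
    omega
  
lemma polVal_abs (k : ℕ) (σ : Fin 2) (π : ℕ → Fin 3 → Fin 2) (s : Fin 3) (hs : s ≠ 0) :
    ∀ n t, polVal (rr k σ) PP π n t s = ∑ j ∈ Finset.range n, rr k σ (t + j) s 0 := by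
  intro n
  induction n with
  | zero => intro t; simp [polVal]
  | succ n ih =>
    intro t
    show rr k σ t s _ + ∑ s', PP t s _ s' * polVal (rr k σ) PP π n (t+1) s' = _
    rw [sumP, nxt_abs s hs, ih (t+1), Finset.sum_range_succ' (fun j => rr k σ (t + j) s 0)]
    have h1 : ∀ j, rr k σ (t + (j + 1)) s 0 = rr k σ (t + 1 + j) s 0 := by
      intro j; rw [Nat.add_assoc, Nat.add_comm 1 j]
    simp only [h1, Nat.add_zero]
    exact add_comm _ _

lemma count : ∀ n a : ℕ, a ≤ n → ∑ j ∈ Finset.range n, (if a ≤ j then (1:ℝ) else 0) = n - a := by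
  intro n
  induction n with
  | zero => intro a ha; interval_cases a; simp
  | succ n ih =>
    intro a ha
    rw [Finset.sum_range_succ]
    by_cases h : a ≤ n
    · rw [ih a h, if_pos h]
      push_cast; ring
    · have ha' : a = n + 1 := by omega
      subst ha'
      rw [if_neg h, Finset.sum_eq_zero (fun j hj => by
        have := Finset.mem_range.mp hj
        rw [if_neg (by omega)])]
      push_cast; ring

/-- value of rewarding absorbing state from time 1 over n steps -/
lemma reward_sum (k n : ℕ) (σ : Fin 2) (hk : k + 1 ≤ n) :
    ∑ j ∈ Finset.range n, rr k σ (1 + j) σ.succ 0 = (n : ℝ) - (k + 1) := by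
  have : ∀ j, rr k σ (1 + j) σ.succ 0 = if k + 1 ≤ j then (1:ℝ) else 0 := by
    intro j
    have hiff : k + 1 < 1 + j ↔ k + 1 ≤ j := by omega
    simp only [rr, and_true, hiff]
  simp only [this]
  rw [count n (k+1) hk]; push_cast; ring

lemma zero_sum (k n t : ℕ) (σ : Fin 2) (s : Fin 3) (hs : s ≠ σ.succ) :
    ∑ j ∈ Finset.range n, rr k σ (t + j) s 0 = 0 := by
  refine Finset.sum_eq_zero fun j _ => ?_
  simp only [rr]
  rw [if_neg (fun hc => hs hc.2)]

lemma polP_abs (π : ℕ → Fin 3 → Fin 2) (s : Fin 3) (hs : s ≠ 0) :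
    ∀ J t j, polP PP π t J s j = if j = s then 1 else 0 := by
  intro J
  induction J with
  | zero => intro t j; show PP t s (π t s) j = _; rw [PP, nxt_abs s hs]
  | succ J ih =>
    intro t j
    show ∑ s', PP t s (π t s) s' * polP PP π (t+1) J s' j = _
    rw [sumP t s _ (fun s' => polP PP π (t+1) J s' j), nxt_abs s hs, ih]

lemma opt_val (k T : ℕ) (hk : k + 1 < T) (σ : Fin 2) :
    bellComp (rr k σ) PP 0 T (fun _ => 0) 0 = (T : ℝ) - k - 1 := by
  obtain ⟨m, rfl⟩ : ∃ m, T = m + 1 := ⟨T - 1, by omega⟩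
  show bell (rr k σ) PP 0 (bellComp (rr k σ) PP 1 m (fun _ => 0)) 0 = _
  rw [bell_eq]
  set W := bellComp (rr k σ) PP 1 m (fun _ => 0) with hWdef
  have hW : ∀ s : Fin 3, s ≠ 0 → W s = if s = σ.succ then ((m : ℝ) + 1) - (k + 1) else 0 := by
    intro s hs
    rw [hWdef, bellComp_abs k σ s hs m 1]
    by_cases h : s = σ.succ
    · subst h
      rw [reward_sum k (m + 1) σ (by omega), if_pos rfl]
      push_cast; ring
    · rw [zero_sum k (m + 1) 1 σ s h, if_neg h]
  have h0 : ∀ a : Fin 2, rr k σ 0 0 a = 0 := by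
    intro a; simp [rr]
  have hnxt : ∀ a : Fin 2, nxt 0 a = a.succ := fun a => if_pos rfl
  simp only [h0, hnxt, zero_add]
  rw [sup2 (fun a : Fin 2 => W a.succ)]
  rw [hW _ (Fin.succ_ne_zero 0), hW _ (Fin.succ_ne_zero 1)]
  have hx : (0 : ℝ) ≤ (m : ℝ) + 1 - (k + 1) := by
    have : (k : ℝ) + 1 ≤ (m : ℝ) + 1 := by exact_mod_cast Nat.succ_le_succ (by omega)
    linarith
  fin_cases σ
  · rw [if_pos (by decide), if_neg (by decide), max_eq_left hx]
    push_cast; ring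
  · rw [if_neg (by decide), if_pos (by decide), max_eq_right hx]
    push_cast; ring

lemma pol_val (k T : ℕ) (hk : k + 1 < T) (σ a₀ : Fin 2) :
    polVal (rr k σ) PP (fun _ _ => a₀) (T + 1) 0 0
      = if a₀ = σ then (T : ℝ) - k - 1 else 0 := by
  show rr k σ 0 0 a₀ + ∑ s', PP 0 0 a₀ s' * polVal (rr k σ) PP (fun _ _ => a₀) T 1 s' = _
  rw [sumP 0 0 a₀ (fun s' => polVal (rr k σ) PP (fun _ _ => a₀) T 1 s'),
    show nxt 0 a₀ = a₀.succ from if_pos rfl,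
    polVal_abs k σ _ a₀.succ (Fin.succ_ne_zero a₀) T 1]
  have h0 : rr k σ 0 0 a₀ = 0 := by simp [rr]
  rw [h0, zero_add]
  by_cases h : a₀ = σ
  · subst h
    rw [reward_sum k T a₀ (by omega), if_pos rfl]
    ring
  · rw [zero_sum k T 1 σ a₀.succ (fun hc => h (Fin.succ_inj.mp hc)), if_neg h]

/-- Linear-regret lower bound without the ergodicity assumption: for every horizon
`T` and prediction horizon `k` with `k + 1 < T` there is a pair of three-state
non-stationary MDP instances (indexed by the random rewarding absorbing state
`σ ∈ Fin 2`, i.e. state `σ + 1`) such that: the instances are valid MDPs, they are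
indistinguishable through step `k` (so any algorithm with prediction horizon `k`
must use the same time-`0` action `a₀` on both), states `1` and `2` are absorbing
(hence the uniform ergodicity / Dobrushin overlap assumption is violated: the
overlap is `0` for every `J`), the optimal value is `T - k - 1`, and for every
time-`0` action `a₀` the expected regret over the uniformly random instance is at
least `(1/2)·(T - k - 1)`. -/
theorem linear_regret_lower_bound (k T : ℕ) (hk : k + 1 < T) :
    ∃ (r : Fin 2 → ℕ → Fin 3 → Fin 2 → ℝ)
      (P : Fin 2 → ℕ → Fin 3 → Fin 2 → Fin 3 → ℝ),
      -- valid transition kernels and rewards in [0,1]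
      (∀ σ t s a s', 0 ≤ P σ t s a s') ∧
      (∀ σ t s a, ∑ s', P σ t s a s' = 1) ∧
      (∀ σ t s a, r σ t s a ∈ Set.Icc (0 : ℝ) 1) ∧
      -- the two instances coincide for the first k+1 steps (what a prediction
      -- horizon of k can reveal at time 0)
      (∀ σ₁ σ₂ t, t ≤ k → r σ₁ t = r σ₂ t ∧ P σ₁ t = P σ₂ t) ∧
      -- states 1 and 2 are absorbing
      (∀ σ t a s', P σ t 1 a s' = if s' = 1 then 1 else 0) ∧
      (∀ σ t a s', P σ t 2 a s' = if s' = 2 then 1 else 0) ∧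
      -- the uniform ergodicity assumption is violated: zero Dobrushin overlap
      (∀ (σ : Fin 2) (J : ℕ) (π₁ π₂ : ℕ → Fin 3 → Fin 2) (t : ℕ),
        ∑ j, min (polP (P σ) π₁ t J 1 j) (polP (P σ) π₂ t J 2 j) = 0) ∧
      -- the offline optimal value from the start state is T - k - 1
      (∀ σ, bellComp (r σ) (P σ) 0 T (fun _ => 0) 0 = (T : ℝ) - k - 1) ∧
      -- every algorithm with prediction horizon k commits to a single time-0
      -- action a₀ on both instances, and its expected regret (uniform over σ)
      -- is at least (1/2)(T - k - 1)
      (∀ a₀ : Fin 2,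
        (1 / 2) *
            ((bellComp (r 0) (P 0) 0 T (fun _ => 0) 0 -
                polVal (r 0) (P 0) (fun _ _ => a₀) (T + 1) 0 0) +
             (bellComp (r 1) (P 1) 0 T (fun _ => 0) 0 -
                polVal (r 1) (P 1) (fun _ _ => a₀) (T + 1) 0 0)) ≥
          (1 / 2) * ((T : ℝ) - k - 1)) := by
  refine ⟨fun σ => rr k σ, fun _ => PP, ?_, ?_, ?_, ?_, ?_, ?_, ?_, ?_, ?_⟩
  · intro σ t s a s'
    simp only [PP]
    split_ifs <;> norm_num
  · intro σ t s a
    have := sumP t s a (fun _ => (1 : ℝ))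
    simpa using this
  · intro σ t s a
    rw [Set.mem_Icc]
    constructor <;> (simp only [rr]; split_ifs <;> norm_num)
  · intro σ₁ σ₂ t ht
    refine ⟨?_, rfl⟩
    funext s a
    have h : ¬ (k + 1 < t) := by omega
    simp [rr, h]
  · intro σ t a s'
    show (if s' = nxt 1 a then (1 : ℝ) else 0) = _
    rw [nxt_abs 1 (by decide)]
  · intro σ t a s'
    show (if s' = nxt 2 a then (1 : ℝ) else 0) = _
    rw [nxt_abs 2 (by decide)]
  · intro σ J π₁ π₂ t
    simp only [polP_abs π₁ 1 (by decide) J t, polP_abs π₂ 2 (by decide) J t,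
      Fin.sum_univ_three]
    norm_num [show (0:Fin 3) ≠ 2 by decide, show (1:Fin 3) ≠ 2 by decide,
      show (2:Fin 3) ≠ 1 by decide]
  · exact fun σ => opt_val k T hk σ
  · intro a₀
    rw [opt_val k T hk 0, opt_val k T hk 1, pol_val k T hk 0 a₀, pol_val k T hk 1 a₀]
    have hx : (0 : ℝ) ≤ (T : ℝ) - k - 1 := by
      have : (k : ℝ) + 1 ≤ (T : ℝ) := by exact_mod_cast hk.le
      linarith
    fin_cases a₀
    · rw [if_pos (by decide), if_neg (by decide)]
      linarith
    · rw [if_neg (by decide), if_pos (by decide)]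
      linarith
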